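/- The semigroup I^cf_λ is bisimple: any two elements α, β of I^cf_λ are Green's D-equivalent, i.e., there exists γ in I^cf_λ with α R γ and γ L β. -/

import Mathlib

open Function Set

namespace IcfPaper

variable {ι : Type*}

lemma trans_none_finite {f g : ι ≃. ι}
    (hf : {a | f a = none}.Finite) (hg : {b | g b = none}.Finite) :
    {a | (f.trans g) a = none}.Finite := by
  have hsub : {a | (f.trans g) a = none} ⊆
      {a | f a = none} ∪ ⋃ b ∈ {b | g b = none}, {a | f.symm b = some a} := by
    intro a ha
    simp only [Set.mem_setOf_eq] at ha
    rcases hfa : f a with _ | b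
    · exact Or.inl hfa
    · have hg' : g b = none := by
        have : (f.trans g) a = (f a).bind g := rfl
        rw [this, hfa, Option.bind_some] at ha
        exact ha
      refine Or.inr ?_
      refine Set.mem_biUnion hg' ?_
      exact (PEquiv.eq_some_iff f).2 hfa
  refine Set.Finite.subset (hf.union (hg.biUnion ?_)) hsub
  intro b _
  apply Set.Subsingleton.finite
  intro a1 h1 a2 h2
  simp only [Set.mem_setOf_eq] at h1 h2
  rw [h1] at h2
  exact Option.some_injective _ h2

/-- The monoid of injective partial selfmaps of `ι` with cofinite domain and range. -/
def Icf (ι : Type*) : Type _ :=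
  {f : ι ≃. ι // {a | f a = none}.Finite ∧ {b | f.symm b = none}.Finite}

namespace Icf

instance : Monoid (Icf ι) where
  mul f g := ⟨f.1.trans g.1, trans_none_finite f.2.1 g.2.1, by
      rw [PEquiv.symm_trans_rev]
      exact trans_none_finite g.2.2 f.2.2⟩
  one := ⟨PEquiv.refl ι, by
      constructor <;>
      · convert Set.finite_empty
        ext a
        simp only [Set.mem_setOf_eq, Set.mem_empty_iff_false, iff_false]
        intro h
        simp at h⟩
  mul_assoc a b c := Subtype.ext (PEquiv.trans_assoc _ _ _)
  one_mul a := Subtype.ext (PEquiv.refl_trans _)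
  mul_one a := Subtype.ext (PEquiv.trans_refl _)

/-- The domain of an element of `Icf ι`. -/
def dom (f : Icf ι) : Set ι := {a | (f.1 a).isSome}

/-- The range of an element of `Icf ι`. -/
def ran (f : Icf ι) : Set ι := {b | (f.1.symm b).isSome}

/-- `d̄ f`, the number of points of `ι` outside of the domain of `f`. -/
noncomputable def dbar (f : Icf ι) : ℕ := (dom f)ᶜ.ncard

/-- `r̄ f`, the number of points of `ι` outside of the range of `f`. -/
noncomputable def rbar (f : Icf ι) : ℕ := (ran f)ᶜ.ncard

end Icf

/-- The bicyclic semigroup `⟨p, q | pq = 1⟩`, realized as `ℕ × ℕ` with the operation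
`(a,b)(c,d) = (a - b + max(b,c), d - c + max(b,c))`. -/
def Bicyclic : Type := ℕ × ℕ

instance : Mul Bicyclic :=
  ⟨fun x y => (x.1 - x.2 + max x.2 y.1, y.2 - y.1 + max x.2 y.1)⟩


/-! ### Auxiliary material for the proof of bisimplicity -/

open scoped Classical

/-- The inverse of an element of `Icf ι`. -/
def Icf.inv (f : Icf ι) : Icf ι :=
  ⟨f.1.symm, f.2.2, by simpa using f.2.1⟩

lemma Icf.mul_val (f g : Icf ι) : (f * g).1 = f.1.trans g.1 := rfl

lemma Icf.not_mem_dom_iff {f : Icf ι} {a : ι} : a ∉ Icf.dom f ↔ f.1 a = none := by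
  simp [Icf.dom, Option.not_isSome_iff_eq_none]

lemma Icf.not_mem_ran_iff {f : Icf ι} {b : ι} : b ∉ Icf.ran f ↔ f.1.symm b = none := by
  simp [Icf.ran, Option.not_isSome_iff_eq_none]

lemma Icf.compl_dom_finite (f : Icf ι) : (Icf.dom f)ᶜ.Finite := by
  convert f.2.1 using 1
  ext a
  simp [Icf.not_mem_dom_iff]

lemma Icf.compl_ran_finite (f : Icf ι) : (Icf.ran f)ᶜ.Finite := by
  convert f.2.2 using 1
  ext a
  simp [Icf.not_mem_ran_iff]

/-- Factorization witnessing the `R`-relation when domains agree. -/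
lemma Icf.eq_mul_of_dom_eq {α γ : Icf ι} (h : Icf.dom γ = Icf.dom α) :
    α = γ * (Icf.inv γ * α) := by
  apply Subtype.ext
  apply PEquiv.ext
  intro a
  show α.1 a = (γ.1 a).bind (γ.1.symm.trans α.1)
  rcases hfa : γ.1 a with _ | b
  · have ha : a ∉ Icf.dom γ := Icf.not_mem_dom_iff.2 hfa
    rw [h] at ha
    rw [Icf.not_mem_dom_iff.1 ha, Option.bind_none]
  · have hs : γ.1.symm b = some a := (PEquiv.eq_some_iff _).2 hfa
    show α.1 a = (γ.1.symm.trans α.1) b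
    show α.1 a = (γ.1.symm b).bind α.1
    rw [hs, Option.bind_some]

/-- Factorization witnessing the `L`-relation when ranges agree. -/
lemma Icf.eq_mul_of_ran_eq {β γ : Icf ι} (h : Icf.ran γ = Icf.ran β) :
    β = (β * Icf.inv γ) * γ := by
  apply Subtype.ext
  apply PEquiv.ext
  intro a
  show β.1 a = ((β.1.trans γ.1.symm) a).bind γ.1
  show β.1 a = ((β.1 a).bind γ.1.symm).bind γ.1
  rcases hfa : β.1 a with _ | b
  · rw [Option.bind_none, Option.bind_none]
  · have hb : b ∈ Icf.ran β := by
      simp only [Icf.ran, Set.mem_setOf_eq]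
      rw [(PEquiv.eq_some_iff _).2 hfa]
      rfl
    rw [← h] at hb
    rcases Option.isSome_iff_exists.1 hb with ⟨c, hc⟩
    rw [Option.bind_some, hc, Option.bind_some, (PEquiv.eq_some_iff _).1 hc]

lemma Icf.range_mul_left_subset {α γ : Icf ι} (h : ∃ χ : Icf ι, α = γ * χ) :
    Set.range (fun χ : Icf ι => α * χ) ⊆ Set.range (fun χ : Icf ι => γ * χ) := by
  rcases h with ⟨χ₀, rfl⟩
  rintro _ ⟨χ, rfl⟩
  exact ⟨χ₀ * χ, (mul_assoc _ _ _).symm⟩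

lemma Icf.range_mul_right_subset {β γ : Icf ι} (h : ∃ χ : Icf ι, γ = χ * β) :
    Set.range (fun χ : Icf ι => χ * γ) ⊆ Set.range (fun χ : Icf ι => χ * β) := by
  rcases h with ⟨χ₀, rfl⟩
  rintro _ ⟨χ, rfl⟩
  exact ⟨χ * χ₀, mul_assoc _ _ _⟩

private lemma dite_aux {ι : Type*} {s t : Set ι} (e : s ≃ t) (a b : ι)
    (h : (if hb : b ∈ t then some ((e.symm ⟨b, hb⟩ : s) : ι) else none) = some a) :
    (if ha : a ∈ s then some ((e ⟨a, ha⟩ : t) : ι) else none) = some b := by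
  split_ifs at h with hb
  · obtain rfl := Option.some_injective _ h
    have ha : ((e.symm ⟨b, hb⟩ : s) : ι) ∈ s := (e.symm ⟨b, hb⟩).2
    rw [dif_pos ha]
    have h2 : (⟨((e.symm ⟨b, hb⟩ : s) : ι), ha⟩ : s) = e.symm ⟨b, hb⟩ := rfl
    rw [h2, Equiv.apply_symm_apply]

/-- The partial equivalence on `ι` induced by an equivalence between two subsets. -/
noncomputable def pequivOfSubtypeEquiv {ι : Type*} {s t : Set ι} (e : s ≃ t) : ι ≃. ι where
  toFun a := if ha : a ∈ s then some ((e ⟨a, ha⟩ : t) : ι) else none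
  invFun b := if hb : b ∈ t then some ((e.symm ⟨b, hb⟩ : s) : ι) else none
  inv a b := by
    constructor
    · exact dite_aux e a b
    · intro h
      exact dite_aux e.symm b a (by simpa using h)

lemma mk_eq_of_compl_finite {ι : Type*} [Infinite ι] {s : Set ι} (hs : sᶜ.Finite) :
    Cardinal.mk s = Cardinal.mk ι := by
  have := Cardinal.mk_compl_of_infinite (sᶜ)
    (hs.lt_aleph0.trans_le (Cardinal.aleph0_le_mk ι))
  rwa [compl_compl] at this

/-- `Icf ι` is bisimple: any two elements are `D`-equivalent, i.e. for all `α β` there is a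
`γ` with `α R γ` and `γ L β`. -/
theorem statement6 {ι : Type*} [Infinite ι] (α β : Icf ι) :
    ∃ γ : Icf ι,
      Set.range (fun χ : Icf ι => α * χ) = Set.range (fun χ : Icf ι => γ * χ) ∧
      Set.range (fun χ : Icf ι => χ * γ) = Set.range (fun χ : Icf ι => χ * β) := by
  -- choose an equivalence between `dom α` and `ran β`
  have hd : (Icf.dom α)ᶜ.Finite := Icf.compl_dom_finite α
  have hr : (Icf.ran β)ᶜ.Finite := Icf.compl_ran_finite β
  have hcard : Cardinal.mk (Icf.dom α) = Cardinal.mk (Icf.ran β) := by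
    rw [mk_eq_of_compl_finite hd, mk_eq_of_compl_finite hr]
  obtain ⟨e⟩ := Cardinal.eq.1 hcard
  set p : ι ≃. ι := pequivOfSubtypeEquiv e with hp
  have hpd : ∀ a : ι, p a = if ha : a ∈ Icf.dom α then some ((e ⟨a, ha⟩ : _) : ι) else none :=
    fun a => rfl
  have hpr : ∀ b : ι, p.symm b =
      if hb : b ∈ Icf.ran β then some ((e.symm ⟨b, hb⟩ : _) : ι) else none :=
    fun b => rfl
  have h1 : {a | p a = none}.Finite := by
    refine hd.subset fun a ha => ?_
    simp only [Set.mem_setOf_eq, hpd] at ha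
    intro has
    rw [dif_pos has] at ha
    cases ha
  have h2 : {b | p.symm b = none}.Finite := by
    refine hr.subset fun b hb => ?_
    simp only [Set.mem_setOf_eq, hpr] at hb
    intro hbs
    rw [dif_pos hbs] at hb
    cases hb
  refine ⟨⟨p, h1, h2⟩, ?_, ?_⟩
  · -- domains agree, so the R-classes agree
    have hdom : Icf.dom (⟨p, h1, h2⟩ : Icf ι) = Icf.dom α := by
      ext a
      simp only [Icf.dom, Set.mem_setOf_eq, hpd]
      split_ifs with ha <;> simp [ha] <;> simpa [Option.not_isSome_iff_eq_none] using ha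
    apply Set.Subset.antisymm
    · exact Icf.range_mul_left_subset ⟨_, Icf.eq_mul_of_dom_eq hdom⟩
    · exact Icf.range_mul_left_subset ⟨_, Icf.eq_mul_of_dom_eq hdom.symm⟩
  · -- ranges agree, so the L-classes agree
    have hran : Icf.ran (⟨p, h1, h2⟩ : Icf ι) = Icf.ran β := by
      ext b
      simp only [Icf.ran, Set.mem_setOf_eq, hpr]
      split_ifs with hb <;> simp [hb] <;> simpa [Option.not_isSome_iff_eq_none] using hb
    apply Set.Subset.antisymm
    · exact Icf.range_mul_right_subset ⟨_, Icf.eq_mul_of_ran_eq hran.symm⟩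
    · exact Icf.range_mul_right_subset ⟨_, Icf.eq_mul_of_ran_eq hran⟩

end IcfPaper
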